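/- Let S and A be finite nonempty types. Let d_i and d_O be probability mass functions on S × A with state marginals d_i^S and d_O^S, and let d_E be a probability mass function on S. Assume d_i is absolutely continuous with respect to d_O, and that d_i^S(s) > 0 implies d_E(s) > 0. Define c*(s) = d_E(s)/(d_E(s)+d_O^S(s)) and η(s,a) = d_i(s,a)/d_O(s,a) wherever d_O(s,a) > 0. Then −Σ_{s : d_i^S(s)>0} d_i^S(s) · log(d_E(s)/d_O^S(s)) + D_KL(d_i‖d_O) = Σ_{(s,a) : d_O(s,a)>0} d_O(s,a) · η(s,a) · (log η(s,a) − log(c*(s)/(1 − c*(s)))), where terms with η(s,a) = 0 contribute 0. -/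

import Mathlib

/-- Kullback–Leibler divergence between pmfs on a finite type:
sum over points with `p x > 0` of `p x * log (p x / q x)`. -/
noncomputable def KL {X : Type*} [Fintype X] (p q : X → ℝ) : ℝ :=
  ∑ x, if 0 < p x then p x * Real.log (p x / q x) else 0

/-- Corollary 1 of the paper: the relaxed imitation-constraint quantity
`-E_{d_i^S}[log (d_E/d_O^S)] + D_KL(d_i‖d_O)` admits the off-policy estimator
`E_{d_O}[η (log η - log (c*/(1-c*)))]`. -/
theorem structural_kl_estimator
    {S A : Type*} [Fintype S] [Fintype A] [Nonempty S] [Nonempty A]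
    (d_i d_O : S × A → ℝ) (d_E : S → ℝ)
    (hdi : ∀ sa, 0 ≤ d_i sa) (hdisum : ∑ sa, d_i sa = 1)
    (hdO : ∀ sa, 0 ≤ d_O sa) (hdOsum : ∑ sa, d_O sa = 1)
    (hdE : ∀ s, 0 ≤ d_E s) (hdEsum : ∑ s, d_E s = 1)
    (diS dOS : S → ℝ)
    (hdiS : ∀ s, diS s = ∑ a, d_i (s, a))
    (hdOS : ∀ s, dOS s = ∑ a, d_O (s, a))
    (habs : ∀ sa, d_O sa = 0 → d_i sa = 0)
    (habsE : ∀ s, 0 < diS s → 0 < d_E s)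
    (cstar : S → ℝ)
    (hc : ∀ s, 0 < d_E s + dOS s → cstar s = d_E s / (d_E s + dOS s))
    (η : S × A → ℝ)
    (hη : ∀ sa, 0 < d_O sa → η sa = d_i sa / d_O sa) :
    -(∑ s, if 0 < diS s then diS s * Real.log (d_E s / dOS s) else 0)
        + KL d_i d_O
      = ∑ sa, if 0 < d_O sa then
          (if 0 < η sa then
            d_O sa * η sa *
              (Real.log (η sa) - Real.log (cstar sa.1 / (1 - cstar sa.1)))
          else 0) else 0 := by
  classical
  have key : ∀ sa : S × A,
      (if 0 < d_O sa then
          (if 0 < η sa then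
            d_O sa * η sa *
              (Real.log (η sa) - Real.log (cstar sa.1 / (1 - cstar sa.1)))
          else 0) else 0)
      = (if 0 < d_i sa then
          d_i sa * (Real.log (d_i sa / d_O sa) - Real.log (d_E sa.1 / dOS sa.1))
        else 0) := by
    intro sa
    by_cases hO : 0 < d_O sa
    · rw [if_pos hO]
      have hη' := hη sa hO
      by_cases hi : 0 < d_i sa
      · have hηpos : 0 < η sa := by rw [hη']; positivity
        rw [if_pos hηpos, if_pos hi]
        have hOeta : d_O sa * η sa = d_i sa := by
          rw [hη']; field_simp
        have hdOSpos : 0 < dOS sa.1 := by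
          rw [hdOS]
          have h1 : d_O (sa.1, sa.2) ≤ ∑ a, d_O (sa.1, a) :=
            Finset.single_le_sum (fun a _ => hdO _) (Finset.mem_univ sa.2)
          have h2 : d_O (sa.1, sa.2) = d_O sa := by simp
          linarith [hO, h1, h2 ▸ h1]
        have hsum : 0 < d_E sa.1 + dOS sa.1 := by
          have := hdE sa.1; linarith
        have hcs := hc sa.1 hsum
        have hratio : cstar sa.1 / (1 - cstar sa.1) = d_E sa.1 / dOS sa.1 := by
          rw [hcs]
          have h1 : 1 - d_E sa.1 / (d_E sa.1 + dOS sa.1)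
              = dOS sa.1 / (d_E sa.1 + dOS sa.1) := by
            field_simp; ring
          rw [h1]
          field_simp
        rw [hOeta, hη', hratio]
      · have hiz : d_i sa = 0 := le_antisymm (not_lt.1 hi) (hdi sa)
        have : ¬ 0 < η sa := by rw [hη', hiz]; simp
        rw [if_neg this, if_neg hi]
    · rw [if_neg hO, if_neg]
      intro hi
      exact absurd (habs sa (le_antisymm (not_lt.1 hO) (hdO sa))) (ne_of_gt hi)
  have L1 : (∑ s, if 0 < diS s then diS s * Real.log (d_E s / dOS s) else 0)
      = ∑ sa : S × A, (if 0 < d_i sa then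
          d_i sa * Real.log (d_E sa.1 / dOS sa.1) else 0) := by
    rw [Fintype.sum_prod_type]
    apply Finset.sum_congr rfl
    intro s _
    have h1 : ∑ a, (if 0 < d_i (s, a) then
        d_i (s, a) * Real.log (d_E s / dOS s) else 0)
        = ∑ a, d_i (s, a) * Real.log (d_E s / dOS s) := by
      apply Finset.sum_congr rfl
      intro a _
      by_cases h : 0 < d_i (s, a)
      · rw [if_pos h]
      · rw [if_neg h, le_antisymm (not_lt.1 h) (hdi (s, a)), zero_mul]
    rw [h1, ← Finset.sum_mul, ← hdiS]
    by_cases h : 0 < diS s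
    · rw [if_pos h]
    · rw [if_neg h, le_antisymm (not_lt.1 h)
        (by rw [hdiS]; exact Finset.sum_nonneg fun a _ => hdi _), zero_mul]
  rw [KL, L1, neg_add_eq_sub, ← Finset.sum_sub_distrib]
  apply Finset.sum_congr rfl
  intro sa _
  rw [key sa]
  by_cases h : 0 < d_i sa
  · simp only [if_pos h]; ring
  · simp only [if_neg h, sub_zero]
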